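/- Let V be a finite-dimensional complex vector space, A ⊂ V* finite with nondegenerate canonical form G_A, and suppose A is a V-system. Let B = A ∩ W for a subspace W ⊆ V* spanned by B, and suppose G_B restricted to W^∨ is nondegenerate. Then B is a V-system in W (with duals taken with respect to G_B restricted to W^∨). -/

import Mathlib

open scoped Classical

/-- Theorem 2 of the paper: Any non-isotropic subsystem `B = A ∩ W` of a
`∨`-system `A` (with nondegenerate canonical form `G_A`, inducing `φ : V ≃ V*` and
`α^∨ = φ⁻¹ α`, and with `W` spanned by `B`) is itself a `∨`-system in `W`, the duals `β^∨_B`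
being taken with respect to the restriction of `G_B` to `W^∨`, assumed nondegenerate. -/
theorem subsystem_is_vee_system
    {V : Type*} [AddCommGroup V] [Module ℂ V] [FiniteDimensional ℂ V]
    (A : Finset (Module.Dual ℂ V))
    (φ : V ≃ₗ[ℂ] Module.Dual ℂ V)
    (hφ : ∀ x y, φ x y = ∑ α ∈ A, α x * α y)
    -- A is a ∨-system:
    (hA : ∀ α ∈ A, ∀ π : Submodule ℂ (Module.Dual ℂ V),
      Module.finrank ℂ π = 2 → α ∈ π → ∃ lam : ℂ,
        ∑ β ∈ A.filter (· ∈ π), β (φ.symm α) • φ.symm β = lam • φ.symm α)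
    (W : Submodule ℂ (Module.Dual ℂ V))
    (B : Finset (Module.Dual ℂ V)) (hB : B = A.filter (· ∈ W))
    (hspan : Submodule.span ℂ (B : Set (Module.Dual ℂ V)) = W)
    -- G_B restricted to W^∨ is nondegenerate:
    (hnd : ∀ x ∈ Submodule.comap (φ : V →ₗ[ℂ] Module.Dual ℂ V) W,
      (∀ y ∈ Submodule.comap (φ : V →ₗ[ℂ] Module.Dual ℂ V) W,
        ∑ β ∈ B, β x * β y = 0) → x = 0)
    -- duals with respect to G_B restricted to W^∨:
    (veeB : Module.Dual ℂ V → V)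
    (hveeB : ∀ β ∈ B, veeB β ∈ Submodule.comap (φ : V →ₗ[ℂ] Module.Dual ℂ V) W ∧
      ∀ y ∈ Submodule.comap (φ : V →ₗ[ℂ] Module.Dual ℂ V) W,
        ∑ γ ∈ B, γ (veeB β) * γ y = β y) :
    -- B is a ∨-system in W:
    ∀ α ∈ B, ∀ π : Submodule ℂ (Module.Dual ℂ V),
      Module.finrank ℂ π = 2 → π ≤ W → α ∈ π → ∃ lam : ℂ,
        ∑ β ∈ B.filter (· ∈ π), β (veeB α) • veeB β = lam • veeB α := by
  have hBsubA : ∀ β ∈ B, β ∈ A := by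
    intro β hβ; rw [hB] at hβ; exact (Finset.mem_filter.mp hβ).1
  have hBsubW : ∀ β ∈ B, β ∈ W := by
    intro β hβ; rw [hB] at hβ; exact (Finset.mem_filter.mp hβ).2
  have hsymm : ∀ x y : V, φ x y = φ y x := by
    intro x y; rw [hφ, hφ]; exact Finset.sum_congr rfl fun a _ => mul_comm _ _
  have hdual : ∀ β ∈ B, φ.symm β ∈ Submodule.comap (φ : V →ₗ[ℂ] Module.Dual ℂ V) W := by
    intro β hβ
    simp only [Submodule.mem_comap, LinearEquiv.coe_coe, LinearEquiv.apply_symm_apply]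
    exact hBsubW β hβ
  -- restriction of A's filtered sums to B on subplanes of W
  have hfilter : ∀ σ : Submodule ℂ (Module.Dual ℂ V), σ ≤ W →
      A.filter (· ∈ σ) = B.filter (· ∈ σ) := by
    intro σ hσW
    rw [hB, Finset.filter_filter]
    exact Finset.filter_congr fun β _ => by
      constructor
      · intro h; exact ⟨hσW h, h⟩
      · intro h; exact h.2
  -- Lemma A : the full B-sum of the vee-system vectors is proportional to γ^∨
  have lemA : ∀ γ ∈ B, γ ≠ 0 → ∃ c : ℂ,
      ∑ β ∈ B, β (φ.symm γ) • φ.symm β = c • φ.symm γ := by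
    intro γ hγB hγ0
    have hγW : γ ∈ W := hBsubW γ hγB
    set P : Module.Dual ℂ V → Prop := fun β => β ∈ Submodule.span ℂ {γ} with hP
    have hPsum : ∀ s : Finset (Module.Dual ℂ V), (∀ β ∈ s, P β) →
        (∑ β ∈ s, β (φ.symm γ) • φ.symm β) ∈ Submodule.span ℂ {φ.symm γ} := by
      intro s hs
      refine Submodule.sum_mem _ fun β hβ => ?_
      obtain ⟨t, ht⟩ := Submodule.mem_span_singleton.mp (hs β hβ)
      rw [← ht, map_smul]
      exact Submodule.smul_mem _ _ (Submodule.smul_mem _ _ (Submodule.mem_span_singleton_self _))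
    have hpairrk : ∀ β : Module.Dual ℂ V, ¬ P β →
        Module.finrank ℂ (Submodule.span ℂ {γ, β} : Submodule ℂ (Module.Dual ℂ V)) = 2 := by
      intro β hβ
      have hind : LinearIndependent ℂ ![γ, β] := by
        rw [LinearIndependent.pair_iff' hγ0]
        intro a ha
        exact hβ (Submodule.mem_span_singleton.mpr ⟨a, ha⟩)
      have hr : Submodule.span ℂ {γ, β} = Submodule.span ℂ (Set.range ![γ, β]) := by
        rw [Matrix.range_cons_cons_empty]
      rw [hr, finrank_span_eq_card hind]
      simp
    have hmem : (∑ β ∈ B, β (φ.symm γ) • φ.symm β) ∈ Submodule.span ℂ {φ.symm γ} := by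
      rw [← Finset.sum_filter_add_sum_filter_not B P]
      refine Submodule.add_mem _ (hPsum _ fun β hβ => (Finset.mem_filter.mp hβ).2) ?_
      set D := B.filter (fun β => ¬ P β) with hD
      set f : Module.Dual ℂ V → Submodule ℂ (Module.Dual ℂ V) :=
        fun β => Submodule.span ℂ {γ, β} with hf
      rw [← Finset.sum_fiberwise_of_maps_to (g := f) (t := D.image f)
        (fun β hβ => Finset.mem_image_of_mem f hβ) _]
      refine Submodule.sum_mem _ fun σ hσ => ?_
      obtain ⟨β₀, hβ₀D, hβ₀σ⟩ := Finset.mem_image.mp hσ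
      have hβ₀B : β₀ ∈ B := (Finset.mem_filter.mp hβ₀D).1
      have hβ₀P : ¬ P β₀ := (Finset.mem_filter.mp hβ₀D).2
      have hσ2 : Module.finrank ℂ σ = 2 := by rw [← hβ₀σ]; exact hpairrk β₀ hβ₀P
      have hσW : σ ≤ W := by
        rw [← hβ₀σ, hf]
        refine Submodule.span_le.mpr ?_
        intro x hx
        rcases hx with h | h
        · rw [h]; exact hγW
        · rw [Set.mem_singleton_iff.mp h]; exact hBsubW β₀ hβ₀B
      have hγσ : γ ∈ σ := by
        rw [← hβ₀σ]; exact Submodule.subset_span (Set.mem_insert _ _)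
      -- the fiber is the sdiff of the two filters
      have hfib : D.filter (fun β => f β = σ) = (B.filter (· ∈ σ)) \ (B.filter P) := by
        ext β
        simp only [hD, Finset.mem_filter, Finset.mem_sdiff, not_and]
        constructor
        · rintro ⟨⟨hβB, hβP⟩, hβσ⟩
          refine ⟨⟨hβB, ?_⟩, fun _ => hβP⟩
          rw [← hβσ]; exact Submodule.subset_span (Set.mem_insert_of_mem _ rfl)
        · rintro ⟨⟨hβB, hβσ⟩, hnP⟩
          have hβP : ¬ P β := hnP hβB
          refine ⟨⟨hβB, hβP⟩, ?_⟩
          refine Submodule.eq_of_le_of_finrank_eq ?_ ?_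
          · rw [hf]
            refine Submodule.span_le.mpr ?_
            intro x hx
            rcases hx with h | h
            · rw [h]; exact hγσ
            · rw [Set.mem_singleton_iff.mp h]; exact hβσ
          · rw [hσ2]; exact hpairrk β hβP
      have hsub : B.filter P ⊆ B.filter (· ∈ σ) := by
        intro β hβ
        obtain ⟨hβB, hβP⟩ := Finset.mem_filter.mp hβ
        obtain ⟨t, ht⟩ := Submodule.mem_span_singleton.mp hβP
        exact Finset.mem_filter.mpr ⟨hβB, by rw [← ht]; exact Submodule.smul_mem _ _ hγσ⟩
      rw [hfib, Finset.sum_sdiff_eq_sub hsub]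
      refine Submodule.sub_mem _ ?_ (hPsum _ fun β hβ => (Finset.mem_filter.mp hβ).2)
      obtain ⟨lam, hlam⟩ := hA γ (hBsubA γ hγB) σ hσ2 hγσ
      rw [hfilter σ hσW] at hlam
      rw [hlam]
      exact Submodule.smul_mem _ _ (Submodule.mem_span_singleton_self _)
    obtain ⟨c, hc⟩ := Submodule.mem_span_singleton.mp hmem
    exact ⟨c, hc.symm⟩
  -- evaluated form of Lemma A
  have lemA' : ∀ γ ∈ B, γ ≠ 0 → ∃ c : ℂ,
      ∀ y : V, (∑ β ∈ B, β (φ.symm γ) * β y) = c * γ y := by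
    intro γ hγB hγ0
    obtain ⟨c, hc⟩ := lemA γ hγB hγ0
    refine ⟨c, fun y => ?_⟩
    have h2 := congrArg (fun v => φ v y) hc
    simp only [map_sum, map_smul, LinearEquiv.apply_symm_apply, LinearMap.coe_sum,
      Finset.sum_apply, LinearMap.smul_apply, smul_eq_mul] at h2
    exact h2
  -- key per-element facts
  have hkey : ∀ γ ∈ B, γ ≠ 0 → ∃ c : ℂ, c ≠ 0 ∧ veeB γ = c⁻¹ • φ.symm γ ∧
      ∀ y : V, (∑ β ∈ B, β (φ.symm γ) * β y) = c * γ y := by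
    intro γ hγB hγ0
    obtain ⟨c, hc⟩ := lemA' γ hγB hγ0
    have hγU := hdual γ hγB
    have hc0 : c ≠ 0 := by
      intro h
      have h1 : φ.symm γ = 0 := hnd _ hγU (fun y _ => by rw [hc y, h, zero_mul])
      apply hγ0
      rw [← φ.apply_symm_apply γ, h1, map_zero]
    refine ⟨c, hc0, ?_, hc⟩
    obtain ⟨hvU, hvEq⟩ := hveeB γ hγB
    have hdiff : veeB γ - c⁻¹ • φ.symm γ = 0 := by
      refine hnd _ (Submodule.sub_mem _ hvU (Submodule.smul_mem _ _ hγU)) ?_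
      intro y hy
      have h1 := hvEq y hy
      have h2 : ∀ β : Module.Dual ℂ V, β (veeB γ - c⁻¹ • φ.symm γ) * β y
          = β (veeB γ) * β y - c⁻¹ * (β (φ.symm γ) * β y) := by
        intro β; rw [map_sub, map_smul, smul_eq_mul]; ring
      rw [Finset.sum_congr rfl fun β _ => h2 β, Finset.sum_sub_distrib, ← Finset.mul_sum,
        h1, hc y]
      field_simp
      ring
    rw [sub_eq_zero] at hdiff
    exact hdiff
  -- main proof
  intro α hαB π hπ2 hπW hαπ
  by_cases hα0 : α = 0
  · obtain ⟨hvU, hvEq⟩ := hveeB α hαB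
    have hv0 : veeB α = 0 := by
      refine hnd _ hvU fun y hy => ?_
      rw [hvEq y hy, hα0]; rfl
    refine ⟨0, ?_⟩
    rw [hv0]
    simp
  · obtain ⟨cα, hcα0, hvα, hcα⟩ := hkey α hαB hα0
    obtain ⟨lam, hlam⟩ := hA α (hBsubA α hαB) π hπ2 hαπ
    rw [hfilter π hπW] at hlam
    refine ⟨lam * cα⁻¹, ?_⟩
    have hterm : ∀ β ∈ B.filter (· ∈ π),
        β (veeB α) • veeB β = (cα⁻¹ * cα⁻¹) • (β (φ.symm α) • φ.symm β) := by
      intro β hβ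
      have hβB : β ∈ B := (Finset.mem_filter.mp hβ).1
      by_cases hβ0 : β = 0
      · rw [hβ0]; simp
      · obtain ⟨cβ, hcβ0, hvβ, hcβ⟩ := hkey β hβB hβ0
        rw [hvα, hvβ, map_smul, smul_eq_mul, smul_smul, smul_smul]
        by_cases hcc : cβ = cα
        · rw [hcc]; congr 1; ring
        · have hpair : α (φ.symm β) = β (φ.symm α) := by
            have h := hsymm (φ.symm α) (φ.symm β)
            simpa only [LinearEquiv.apply_symm_apply] using h
          have hs1 := hcα (φ.symm β)
          have hs2 := hcβ (φ.symm α)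
          have hss : (∑ g ∈ B, g (φ.symm α) * g (φ.symm β))
              = ∑ g ∈ B, g (φ.symm β) * g (φ.symm α) :=
            Finset.sum_congr rfl fun g _ => mul_comm _ _
          have h0 : β (φ.symm α) = 0 := by
            have he : cα * β (φ.symm α) = cβ * β (φ.symm α) := by
              rw [← hpair, ← hs1, hss, hs2, hpair]
            have : (cα - cβ) * β (φ.symm α) = 0 := by rw [sub_mul, he, sub_self]
            rcases mul_eq_zero.mp this with h | h
            · exact absurd (sub_eq_zero.mp h).symm hcc
            · exact h
          rw [h0]; congr 1; ring
    rw [Finset.sum_congr rfl hterm, ← Finset.smul_sum, hlam, hvα, smul_smul, smul_smul]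
    congr 1
    ring
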